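/- Suppose X ∈ {0,*}^{n×m} satisfies: for every non-empty subset V ⊆ [1;n] there exists a column v with |V ∩ NZR(v)| = 1. Then every matrix M ∈ ℝ^{n×m} with the non-zero structure of X has full row rank n. -/

import Mathlib

open Matrix Finset

/-- If `X` satisfies (G₀) — every non-empty `V` admits a column `v` with
`|V ∩ NZR(v)| = 1` — then every real matrix with the non-zero structure of
`X` has full row rank `n`. -/
theorem full_rank_of_G0 (n m : ℕ) (X : Matrix (Fin n) (Fin m) Bool)
    (hG0 : ∀ V : Finset (Fin n), V.Nonempty →
      ∃ v : Fin m, (V.filter (fun i => X i v = true)).card = 1) :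
    ∀ M : Matrix (Fin n) (Fin m) ℝ,
      (∀ i j, M i j ≠ 0 ↔ X i j = true) → M.rank = n := by
  intro M hM
  have hli : LinearIndependent ℝ M.row := by
    rw [Fintype.linearIndependent_iff]
    intro g hg
    by_contra h
    push_neg at h
    set V : Finset (Fin n) := Finset.univ.filter (fun i => g i ≠ 0) with hV
    have hVne : V.Nonempty := by
      obtain ⟨i, hi⟩ := h
      exact ⟨i, by simp [hV, hi]⟩
    obtain ⟨v, hv⟩ := hG0 V hVne
    obtain ⟨i₀, hi₀⟩ := Finset.card_eq_one.mp hv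
    have hi₀mem : i₀ ∈ V.filter (fun i => X i v = true) := hi₀ ▸ Finset.mem_singleton_self i₀
    rw [Finset.mem_filter] at hi₀mem
    have hgv : ∑ i, g i * M i v = 0 := by
      have := congrFun hg v
      simpa using this
    have hsum : ∑ i, g i * M i v = g i₀ * M i₀ v := by
      rw [← Finset.sum_filter_ne_zero]
      have : Finset.univ.filter (fun i => g i * M i v ≠ 0)
          = {i₀} := by
        rw [← hi₀]
        ext i
        simp only [Finset.mem_filter, Finset.mem_univ, true_and, hV, ne_eq, mul_eq_zero,
          not_or, hM i v]

      rw [this, Finset.sum_singleton]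
    rw [hsum, mul_eq_zero] at hgv
    rcases hgv with hgv | hgv
    · have := (Finset.mem_filter.mp hi₀mem.1).2; exact this hgv
    · exact ((hM i₀ v).mpr hi₀mem.2) hgv
  have := hli.rank_matrix
  simpa using this
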